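/- Let φ be a faithful normal state on a factor M acting standardly on L²(M,φ), and let θ be an equi-modular endomorphism of (M,φ) with implementing isometry u_θ. Then there exists a (unique) φ-preserving faithful normal conditional expectation E from M onto the subfactor P = θ(M), and e_θ = u_θ u_θ* is the orthogonal projection onto the closure of P·1̂_M, and satisfies E(x)e_θ = e_θ x e_θ for all x ∈ M (i.e., e_θ is the Jones projection associated to E). -/

import Mathlib

set_option synthInstance.maxHeartbeats 400000
set_option maxHeartbeats 1000000

open scoped InnerProductSpace ComplexConjugate

noncomputable section

namespace Paper

variable {H : Type} [NormedAddCommGroup H] [InnerProductSpace ℂ H] [CompleteSpace H]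
variable {H' : Type} [NormedAddCommGroup H'] [InnerProductSpace ℂ H'] [CompleteSpace H']

/-- An operator is a (self-adjoint, idempotent) orthogonal projection. -/
def IsProjection (p : H →L[ℂ] H) : Prop := IsSelfAdjoint p ∧ p * p = p

/-- The vector state determined by a vector `Ω`. -/
def vecState (Ω : H) (x : H →L[ℂ] H) : ℂ := ⟪x Ω, Ω⟫_ℂ

/-- A normal state on a von Neumann algebra, described via its canonical form as a
countable convex combination of vector states. -/
def IsNormalState (M : Set (H →L[ℂ] H)) (φ : (H →L[ℂ] H) → ℂ) : Prop :=
  ∃ ξ : ℕ → H, (Summable fun n => ‖ξ n‖ ^ 2) ∧ (∑' n, ‖ξ n‖ ^ 2) = 1 ∧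
    ∀ x ∈ M, φ x = ∑' n, ⟪x (ξ n), ξ n⟫_ℂ

/-- Normality (complete additivity) of a map between operator algebras: it is `σ`-weakly
continuous, equivalently it preserves sums of orthogonal families of projections lying in the
given domain `S`. -/
def IsNormalMapOn (S : Set (H →L[ℂ] H)) (Θ : (H →L[ℂ] H) → (H' →L[ℂ] H')) : Prop :=
  ∀ {ι : Type} (p : ι → (H →L[ℂ] H)) (q : H →L[ℂ] H),
    (∀ i, p i ∈ S) → q ∈ S →
    (∀ i, IsProjection (p i)) → (∀ i k, i ≠ k → p i * p k = 0) →
    (∀ ξ : H, HasSum (fun i => p i ξ) (q ξ)) →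
    ∀ ξ : H', HasSum (fun i => Θ (p i) ξ) (Θ q ξ)

/-- `Θ` is a `*`-homomorphism on the subset `S` (typically a von Neumann algebra). -/
structure IsStarHomOn (S : Set (H →L[ℂ] H)) (Θ : (H →L[ℂ] H) → (H' →L[ℂ] H')) : Prop where
  map_add : ∀ x ∈ S, ∀ y ∈ S, Θ (x + y) = Θ x + Θ y
  map_smul : ∀ (c : ℂ), ∀ x ∈ S, Θ (c • x) = c • Θ x
  map_mul : ∀ x ∈ S, ∀ y ∈ S, Θ (x * y) = Θ x * Θ y
  map_star : ∀ x ∈ S, Θ (star x) = star (Θ x)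

/-- The (self-adjoint part of the) center of `S` is trivial. -/
def IsFactorSet (S : Set (H →L[ℂ] H)) : Prop :=
  ∀ x ∈ S, (∀ y ∈ S, x * y = y * x) → ∃ c : ℂ, x = c • (1 : H →L[ℂ] H)

/-- A type `I` factor: a factor possessing a minimal projection. -/
def IsTypeIFactorSet (S : Set (H →L[ℂ] H)) : Prop :=
  IsFactorSet S ∧ ∃ p ∈ S, p ≠ 0 ∧ IsProjection p ∧
    ∀ q ∈ S, IsProjection q → q * p = q → q = 0 ∨ q = p

/-- `z` is the central support of the normal state `φ` of the von Neumann algebra `S`, i.e. the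
smallest central projection of full measure. -/
structure IsCentralSupport (S : Set (H →L[ℂ] H)) (φ : (H →L[ℂ] H) → ℂ) (z : H →L[ℂ] H) :
    Prop where
  mem : z ∈ S
  proj : IsProjection z
  central : ∀ y ∈ S, z * y = y * z
  full : φ z = 1
  min : ∀ w ∈ S, IsProjection w → (∀ y ∈ S, w * y = y * w) → φ w = 1 → z * w = z

/-- The von Neumann algebra generated by a (self-adjoint) set of operators. -/
def vN (S : Set (H →L[ℂ] H)) : Set (H →L[ℂ] H) := Set.centralizer (Set.centralizer S)

/-- Standard form data for a von Neumann algebra `M` with cyclic separating unit vector `Ω`: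
`J` is the modular conjugation (an antiunitary involution fixing `Ω`, conjugating `M` onto its
commutant, and positive on the cone `{x j(x) Ω}`), and `j = J (·) J`. -/
structure StandardForm (M : VonNeumannAlgebra H) (Ω : H) (J : H → H)
    (j : (H →L[ℂ] H) → (H →L[ℂ] H)) : Prop where
  unit : ‖Ω‖ = 1
  cyclic : Dense {ξ : H | ∃ x ∈ M, x Ω = ξ}
  separating : ∀ x ∈ M, x Ω = 0 → x = 0
  Jadd : ∀ ξ η : H, J (ξ + η) = J ξ + J η
  Jsmul : ∀ (c : ℂ) (ξ : H), J (c • ξ) = (starRingEnd ℂ) c • J ξ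
  Jinvol : ∀ ξ : H, J (J ξ) = ξ
  Jinner : ∀ ξ η : H, ⟪J ξ, J η⟫_ℂ = ⟪η, ξ⟫_ℂ
  JΩ : J Ω = Ω
  jdef : ∀ (x : H →L[ℂ] H) (ξ : H), j x ξ = J (x (J ξ))
  jmapsTo : ∀ x ∈ M, j x ∈ Set.centralizer (M : Set (H →L[ℂ] H))
  jsurj : ∀ y ∈ Set.centralizer (M : Set (H →L[ℂ] H)), ∃ x ∈ M, j x = y
  pos : ∀ x ∈ M, 0 ≤ (⟪(x * j x) Ω, Ω⟫_ℂ).re ∧ (⟪(x * j x) Ω, Ω⟫_ℂ).im = 0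

/-- A unital `*`-endomorphism of `M` preserving the (faithful, normal) vector state of `Ω`. -/
structure StateEndo (M : VonNeumannAlgebra H) (Ω : H)
    (θ : (H →L[ℂ] H) → (H →L[ℂ] H)) : Prop where
  mapsTo : Set.MapsTo θ (M : Set (H →L[ℂ] H)) (M : Set (H →L[ℂ] H))
  unital : θ 1 = 1
  hom : IsStarHomOn (M : Set (H →L[ℂ] H)) θ
  state : ∀ x ∈ M, ⟪θ x Ω, Ω⟫_ℂ = ⟪x Ω, Ω⟫_ℂ

/-- `u` is the isometry of the GNS space implementing `θ`:  `u x Ω = θ(x) Ω`. -/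
def Implements (M : VonNeumannAlgebra H) (Ω : H) (θ : (H →L[ℂ] H) → (H →L[ℂ] H))
    (u : H →L[ℂ] H) : Prop :=
  (∀ ξ : H, ‖u ξ‖ = ‖ξ‖) ∧ ∀ x ∈ M, u (x Ω) = θ x Ω

/-- `u` commutes with the modular conjugation `J`. -/
def CommutesWithJ (J : H → H) (u : H →L[ℂ] H) : Prop := ∀ ξ : H, u (J ξ) = J (u ξ)

/-- `θ` is equi-modular: its implementing isometry commutes with `J`. -/
def EquiModular (M : VonNeumannAlgebra H) (Ω : H) (J : H → H)
    (θ : (H →L[ℂ] H) → (H →L[ℂ] H)) : Prop :=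
  ∃ u : H →L[ℂ] H, Implements M Ω θ u ∧ CommutesWithJ J u

/-- `Θ = θ⁽²⁾` is a unital normal `*`-endomorphism of `B(L²(M,φ))` extending `θ` and
`j ∘ θ ∘ j`. -/
structure IsExtension (M : VonNeumannAlgebra H) (j : (H →L[ℂ] H) → (H →L[ℂ] H))
    (θ : (H →L[ℂ] H) → (H →L[ℂ] H)) (Θ : (H →L[ℂ] H) → (H →L[ℂ] H)) : Prop where
  hom : IsStarHomOn (Set.univ : Set (H →L[ℂ] H)) Θ
  unital : Θ 1 = 1
  normal : IsNormalMapOn (Set.univ : Set (H →L[ℂ] H)) Θ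
  onM : ∀ x ∈ M, Θ x = θ x
  onComm : ∀ x ∈ M, Θ (j x) = j (θ x)

/-- `θ` is extendable. -/
def Extendable (M : VonNeumannAlgebra H) (j : (H →L[ℂ] H) → (H →L[ℂ] H))
    (θ : (H →L[ℂ] H) → (H →L[ℂ] H)) : Prop :=
  ∃ Θ : (H →L[ℂ] H) → (H →L[ℂ] H), IsExtension M j θ Θ

/-- An `E₀`-semigroup on the von Neumann probability space `(M, ⟨·Ω,Ω⟩)`. -/
structure IsE0Semigroup (M : VonNeumannAlgebra H) (Ω : H)
    (α : ℝ → (H →L[ℂ] H) → (H →L[ℂ] H)) : Prop where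
  endo : ∀ t : ℝ, 0 ≤ t → StateEndo M Ω (α t)
  id0 : ∀ x ∈ M, α 0 x = x
  semigroup : ∀ s t : ℝ, 0 ≤ s → 0 ≤ t → ∀ x ∈ M, α s (α t x) = α (s + t) x
  weakCont : ∀ x ∈ M, ∀ ξ η : H, ContinuousOn (fun t : ℝ => ⟪α t x ξ, η⟫_ℂ) (Set.Ici 0)

/-- A `φ`-preserving faithful normal conditional expectation from `M` onto the subalgebra with
underlying set `P ⊆ M`, where `φ` is the vector state of `Ω`. -/
structure IsCondExp (M : VonNeumannAlgebra H) (Ω : H) (P : Set (H →L[ℂ] H))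
    (E : (H →L[ℂ] H) → (H →L[ℂ] H)) : Prop where
  mapsTo : ∀ x ∈ M, E x ∈ P
  map_add : ∀ x ∈ M, ∀ y ∈ M, E (x + y) = E x + E y
  map_smul : ∀ (c : ℂ), ∀ x ∈ M, E (c • x) = c • E x
  map_star : ∀ x ∈ M, E (star x) = star (E x)
  idOnP : ∀ y ∈ P, E y = y
  bimodule : ∀ a ∈ P, ∀ b ∈ P, ∀ x ∈ M, E (a * x * b) = a * E x * b
  positive : ∀ x ∈ M, (E (star x * x)).IsPositive
  state : ∀ x ∈ M, ⟪E x Ω, Ω⟫_ℂ = ⟪x Ω, Ω⟫_ℂ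
  faithful : ∀ x ∈ M, E (star x * x) = 0 → x = 0
  normal : IsNormalMapOn (M : Set (H →L[ℂ] H)) E



lemma isClosed_centralizer (T : Set (H →L[ℂ] H)) : IsClosed (Set.centralizer T) := by
  have : Set.centralizer T = ⋂ c ∈ T, {x : H →L[ℂ] H | c * x = x * c} := by
    ext x; simp [Set.mem_centralizer_iff, Set.mem_iInter]
  rw [this]
  exact isClosed_biInter fun c _ => isClosed_eq (continuous_mul_left c) (continuous_mul_right c)

lemma isClosed_vN (M : VonNeumannAlgebra H) : IsClosed (M : Set (H →L[ℂ] H)) := by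
  rw [← M.centralizer_centralizer]
  exact isClosed_centralizer _

open scoped ComplexOrder in
lemma exists_sqrt_mem (M : VonNeumannAlgebra H) {z : H →L[ℂ] H} (hz : z ∈ M)
    (hpos : z.IsPositive) : ∃ s, s ∈ M ∧ IsSelfAdjoint s ∧ s * s = z := by
  have hzsa : IsSelfAdjoint z := hpos.isSelfAdjoint
  have hzn : IsStarNormal z := hzsa.isStarNormal
  have hz0 : (0 : H →L[ℂ] H) ≤ z := (ContinuousLinearMap.nonneg_iff_isPositive z).mpr hpos
  set f : ℂ → ℂ := fun w => (Real.sqrt w.re : ℂ) with hfdef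
  have hfc : Continuous f :=
    Complex.continuous_ofReal.comp (Real.continuous_sqrt.comp Complex.continuous_re)
  set s := cfc f z with hs
  have hspec : ∀ w ∈ spectrum ℂ z, f w * f w = w := by
    intro w hw
    have h0 : (0 : ℂ) ≤ w := spectrum_nonneg_of_nonneg hz0 hw
    rw [Complex.le_def] at h0
    have hre : 0 ≤ w.re := by simpa using h0.1
    have him : w.im = 0 := by simpa using h0.2.symm
    have : Real.sqrt w.re * Real.sqrt w.re = w.re := Real.mul_self_sqrt hre
    simp only [hfdef]
    rw [← Complex.ofReal_mul, this]
    exact (Complex.re_add_im w) ▸ by simp [him]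
  have hmul : s * s = z := by
    rw [hs, ← cfc_mul f f z hfc.continuousOn hfc.continuousOn]
    calc cfc (fun w => f w * f w) z = cfc (fun w : ℂ => w) z := cfc_congr hspec
    _ = z := cfc_id' ℂ z
  have hsa : IsSelfAdjoint s := by
    show star s = s
    rw [hs, ← cfc_star f z]
    apply cfc_congr
    intro w _
    simp [hfdef, Complex.conj_ofReal]
  refine ⟨s, ?_, hsa, hmul⟩
  have h1 : s ∈ StarAlgebra.elemental ℂ z := by
    rw [hs, cfc_apply f z hzn hfc.continuousOn, cfcHom_eq_of_isStarNormal]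
    exact ((continuousFunctionalCalculus z) _).2
  have h2 : (StarAlgebra.elemental ℂ z : Set (H →L[ℂ] H)) ⊆ closure (M : Set (H →L[ℂ] H)) := by
    have hadj : (StarAlgebra.adjoin ℂ ({z} : Set (H →L[ℂ] H)) : Set (H →L[ℂ] H))
        ⊆ (M : Set (H →L[ℂ] H)) := by
      intro t ht
      exact StarAlgebra.adjoin_le (by simpa using hz) ht
    exact closure_mono hadj
  exact (isClosed_vN M).closure_subset (h2 h1)


lemma isPositive_star_mul_self (a : H →L[ℂ] H) : (star a * a).IsPositive := by
  rw [ContinuousLinearMap.isPositive_def']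
  constructor
  · rw [IsSelfAdjoint, star_mul, star_star]
  · intro ξ
    have : (star a * a) ξ = ContinuousLinearMap.adjoint a (a ξ) := by
      rw [ContinuousLinearMap.mul_apply, ContinuousLinearMap.star_eq_adjoint]
    rw [ContinuousLinearMap.reApplyInnerSelf, this, ContinuousLinearMap.adjoint_inner_left]
    exact inner_self_nonneg

lemma norm_le_one_of_pos_le_one {T : H →L[ℂ] H} (h0 : T.IsPositive)
    (h1 : ((1 : H →L[ℂ] H) - T).IsPositive) : ‖T‖ ≤ 1 := by
  have hT0 : (0 : H →L[ℂ] H) ≤ T := (ContinuousLinearMap.nonneg_iff_isPositive T).mpr h0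
  have hT1 : T ≤ 1 := (ContinuousLinearMap.le_def T 1).mpr h1
  exact (CStarAlgebra.norm_le_one_iff_of_nonneg T hT0).mpr hT1




section Main
open ContinuousLinearMap
variable {M : VonNeumannAlgebra H} {Ω : H} {J : H → H} {j : (H →L[ℂ] H) → (H →L[ℂ] H)}
variable {θ : (H →L[ℂ] H) → (H →L[ℂ] H)} {u : H →L[ℂ] H}

lemma u_inner (hu : Implements M Ω θ u) (ξ η : H) : ⟪u ξ, u η⟫_ℂ = ⟪ξ, η⟫_ℂ :=
  LinearIsometry.inner_map_map ⟨(u : H →ₗ[ℂ] H), hu.1⟩ ξ η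

lemma adj_mul_self (hu : Implements M Ω θ u) : adjoint u * u = 1 := by
  ext ξ
  apply ext_inner_right ℂ
  intro η
  rw [mul_apply_eq_comp, adjoint_inner_left, u_inner hu, one_apply_eq_self]

lemma u_omega (hθ : StateEndo M Ω θ) (hu : Implements M Ω θ u) : u Ω = Ω := by
  have h1 := hu.2 1 (one_mem M)
  simpa [hθ.unital] using h1

lemma intertwine (hSF : StandardForm M Ω J j) (hθ : StateEndo M Ω θ)
    (hu : Implements M Ω θ u) {y : H →L[ℂ] H} (hy : y ∈ M) : u * y = θ y * u := by
  have hfun : ⇑(u * y) = ⇑(θ y * u) := by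
    refine Continuous.ext_on hSF.cyclic (u * y).continuous (θ y * u).continuous ?_
    rintro ξ ⟨x, hx, rfl⟩
    simp only [mul_apply_eq_comp]
    have h1 : u (y (x Ω)) = u ((y * x) Ω) := by rw [mul_apply_eq_comp]
    rw [h1, hu.2 _ (mul_mem hy hx), hθ.hom.map_mul y hy x hx, mul_apply_eq_comp, hu.2 x hx]
  ext ξ; exact congrFun hfun ξ

lemma adj_intertwine (hSF : StandardForm M Ω J j) (hθ : StateEndo M Ω θ)
    (hu : Implements M Ω θ u) {y : H →L[ℂ] H} (hy : y ∈ M) :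
    adjoint u * θ y = y * adjoint u := by
  have h : u * star y = θ (star y) * u := intertwine hSF hθ hu (star_mem hy)
  have h2 : star (u * star y) = star (θ (star y) * u) := congrArg star h
  rw [star_mul, star_mul, star_star] at h2
  have h3 : star (θ (star y)) = θ y := by
    rw [← hθ.hom.map_star (star y) (star_mem hy), star_star]
  rw [h3] at h2
  rw [← star_eq_adjoint]
  exact h2.symm

lemma compress (hSF : StandardForm M Ω J j) (hθ : StateEndo M Ω θ)
    (hu : Implements M Ω θ u) {y : H →L[ℂ] H} (hy : y ∈ M) :
    adjoint u * θ y * u = y := by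
  rw [adj_intertwine hSF hθ hu hy, mul_assoc, adj_mul_self hu, mul_one]

lemma j_star (hSF : StandardForm M Ω J j) (y : H →L[ℂ] H) : j (star y) = star (j y) := by
  have hsa : star (j y) = adjoint (j y) := star_eq_adjoint _
  rw [hsa]
  ext η
  apply ext_inner_left ℂ
  intro ξ
  rw [adjoint_inner_right, hSF.jdef, hSF.jdef]
  calc ⟪ξ, J ((star y) (J η))⟫_ℂ = ⟪J (J ξ), J ((star y) (J η))⟫_ℂ := by rw [hSF.Jinvol]
  _ = ⟪(star y) (J η), J ξ⟫_ℂ := hSF.Jinner _ _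
  _ = ⟪J η, y (J ξ)⟫_ℂ := by rw [star_eq_adjoint, adjoint_inner_left]
  _ = ⟪J (y (J ξ)), J (J η)⟫_ℂ := (hSF.Jinner _ _).symm
  _ = ⟪J (y (J ξ)), η⟫_ℂ := by rw [hSF.Jinvol]

lemma u_j (hSF : StandardForm M Ω J j) (hθ : StateEndo M Ω θ)
    (hu : Implements M Ω θ u) (hequi : CommutesWithJ J u) {y : H →L[ℂ] H} (hy : y ∈ M) :
    u * j y = j (θ y) * u := by
  ext ξ
  have hi : ∀ η, u (y η) = θ y (u η) := by
    intro η
    have := congrFun (congrArg (fun (A : H →L[ℂ] H) => ⇑A) (intertwine hSF hθ hu hy)) η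
    simpa [mul_apply_eq_comp] using this
  simp only [mul_apply_eq_comp, hSF.jdef]
  rw [hequi (y (J ξ)), hi (J ξ), hequi ξ]

lemma j_adj (hSF : StandardForm M Ω J j) (hθ : StateEndo M Ω θ)
    (hu : Implements M Ω θ u) (hequi : CommutesWithJ J u) {y : H →L[ℂ] H} (hy : y ∈ M) :
    j y * adjoint u = adjoint u * j (θ y) := by
  have h : u * j (star y) = j (θ (star y)) * u := u_j hSF hθ hu hequi (star_mem hy)
  have h2 := congrArg star h
  rw [star_mul, star_mul] at h2
  rw [j_star hSF, star_star] at h2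
  have h3 : star (j (θ (star y))) = j (θ y) := by
    rw [← j_star hSF, ← hθ.hom.map_star (star y) (star_mem hy), star_star]
  rw [h3] at h2
  rw [← star_eq_adjoint]
  exact h2

lemma compress_mem (hSF : StandardForm M Ω J j) (hθ : StateEndo M Ω θ)
    (hu : Implements M Ω θ u) (hequi : CommutesWithJ J u) {x : H →L[ℂ] H} (hx : x ∈ M) :
    adjoint u * x * u ∈ M := by
  rw [← SetLike.mem_coe, ← M.centralizer_centralizer]
  intro c hc
  obtain ⟨y, hy, rfl⟩ := hSF.jsurj c hc
  have hθy : θ y ∈ M := hθ.mapsTo hy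
  have hcomm : j (θ y) * x = x * j (θ y) := (hSF.jmapsTo (θ y) hθy x hx).symm
  calc j y * (adjoint u * x * u)
      = (j y * adjoint u) * (x * u) := by simp only [mul_assoc]
  _ = (adjoint u * j (θ y)) * (x * u) := by rw [j_adj hSF hθ hu hequi hy]
  _ = adjoint u * ((j (θ y) * x) * u) := by simp only [mul_assoc]
  _ = adjoint u * ((x * j (θ y)) * u) := by rw [hcomm]
  _ = adjoint u * (x * (j (θ y) * u)) := by simp only [mul_assoc]
  _ = adjoint u * (x * (u * j y)) := by rw [u_j hSF hθ hu hequi hy]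
  _ = adjoint u * x * u * j y := by simp only [mul_assoc]

end Main

section Main2
open ContinuousLinearMap
variable {M : VonNeumannAlgebra H} {Ω : H} {J : H → H} {j : (H →L[ℂ] H) → (H →L[ℂ] H)}
variable {θ : (H →L[ℂ] H) → (H →L[ℂ] H)} {u : H →L[ℂ] H}

lemma theta_zero (hθ : StateEndo M Ω θ) : θ 0 = 0 := by
  have := hθ.hom.map_smul 0 0 (zero_mem M)
  simpa using this

lemma theta_sum (hθ : StateEndo M Ω θ) {ι : Type} (F : Finset ι) (m : ι → (H →L[ℂ] H))
    (hm : ∀ i, m i ∈ M) : θ (∑ i ∈ F, m i) = ∑ i ∈ F, θ (m i) := by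
  classical
  induction F using Finset.induction with
  | empty => simpa using theta_zero hθ
  | insert _ _ hx ih =>
    rw [Finset.sum_insert hx, Finset.sum_insert hx,
      hθ.hom.map_add _ (hm _) _ (sum_mem fun i _ => hm i), ih]

lemma theta_sub (hθ : StateEndo M Ω θ) {a b : H →L[ℂ] H} (ha : a ∈ M) (hb : b ∈ M) :
    θ (a - b) = θ a - θ b := by
  have hnb : θ (-b) = -θ b := by
    have := hθ.hom.map_smul (-1) b hb
    simpa [neg_one_smul] using this
  have hnbm : -b ∈ M := neg_mem hb
  rw [sub_eq_add_neg, hθ.hom.map_add a ha _ hnbm, hnb, sub_eq_add_neg]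

lemma theta_pos (hθ : StateEndo M Ω θ) {z : H →L[ℂ] H} (hz : z ∈ M) (hp : z.IsPositive) :
    (θ z).IsPositive := by
  obtain ⟨s, hsM, hssa, hss⟩ := exists_sqrt_mem M hz hp
  have : θ z = star (θ s) * θ s := by
    rw [← hss, hθ.hom.map_mul s hsM s hsM, ← hθ.hom.map_star s hsM, hssa.star_eq]
  rw [this]; exact isPositive_star_mul_self _

lemma theta_norm_le (hθ : StateEndo M Ω θ) {z : H →L[ℂ] H} (hz : z ∈ M)
    (h0 : z.IsPositive) (h1 : ((1 : H →L[ℂ] H) - z).IsPositive) : ‖θ z‖ ≤ 1 := by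
  apply norm_le_one_of_pos_le_one (theta_pos hθ hz h0)
  have hz1 : (1 : H →L[ℂ] H) - z ∈ M := sub_mem (one_mem M) hz
  have h2 : θ (1 - z) = 1 - θ z := by
    rw [theta_sub hθ (one_mem M) hz, hθ.unital]
  rw [← h2]
  exact theta_pos hθ hz1 h1

end Main2

section Main3
open ContinuousLinearMap
variable {M : VonNeumannAlgebra H} {Ω : H} {J : H → H} {j : (H →L[ℂ] H) → (H →L[ℂ] H)}
variable {θ : (H →L[ℂ] H) → (H →L[ℂ] H)} {u : H →L[ℂ] H}

lemma J_isometry (hSF : StandardForm M Ω J j) : Isometry J := by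
  have hnorm : ∀ ζ : H, ‖J ζ‖ = ‖ζ‖ := by
    intro ζ
    have h2 : ⟪J ζ, J ζ⟫_ℂ = ⟪ζ, ζ⟫_ℂ := hSF.Jinner ζ ζ
    have h3 : (‖J ζ‖ : ℝ)^2 = (‖ζ‖ : ℝ)^2 := by
      rw [← inner_self_eq_norm_sq (𝕜 := ℂ), ← inner_self_eq_norm_sq (𝕜 := ℂ), h2]
    nlinarith [norm_nonneg (J ζ), norm_nonneg ζ]
  apply Isometry.of_dist_eq
  intro ζ₁ ζ₂
  have hneg : J (-ζ₂) = -(J ζ₂) := by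
    rw [show -ζ₂ = (-1 : ℂ) • ζ₂ by rw [neg_one_smul], hSF.Jsmul]
    simp
  have hsub : J (ζ₁ - ζ₂) = J ζ₁ - J ζ₂ := by
    rw [sub_eq_add_neg, hSF.Jadd, hneg, sub_eq_add_neg]
  rw [dist_eq_norm, dist_eq_norm, ← hsub, hnorm]

lemma dense_commutant_orbit (hSF : StandardForm M Ω J j) :
    Dense {ξ : H | ∃ c ∈ Set.centralizer (M : Set (H →L[ℂ] H)), c Ω = ξ} := by
  have hsub : J '' {ξ : H | ∃ x ∈ M, x Ω = ξ}
      ⊆ {ξ : H | ∃ c ∈ Set.centralizer (M : Set (H →L[ℂ] H)), c Ω = ξ} := by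
    rintro _ ⟨_, ⟨x, hx, rfl⟩, rfl⟩
    exact ⟨j x, hSF.jmapsTo x hx, by rw [hSF.jdef, hSF.JΩ]⟩
  have hJ_surj : Function.Surjective J := fun ξ => ⟨J ξ, hSF.Jinvol ξ⟩
  have h1 : Dense (J '' {ξ : H | ∃ x ∈ M, x Ω = ξ}) := by
    rw [dense_iff_closure_eq]
    have h2 : J '' closure {ξ : H | ∃ x ∈ M, x Ω = ξ}
        ⊆ closure (J '' {ξ : H | ∃ x ∈ M, x Ω = ξ}) :=
      image_closure_subset_closure_image (J_isometry hSF).continuous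
    rw [hSF.cyclic.closure_eq, Set.image_univ, hJ_surj.range_eq] at h2
    exact Set.univ_subset_iff.mp h2
  exact h1.mono hsub

lemma E_normal (hSF : StandardForm M Ω J j) (hθ : StateEndo M Ω θ)
    (hu : Implements M Ω θ u) (hequi : CommutesWithJ J u) :
    IsNormalMapOn (M : Set (H →L[ℂ] H)) (fun x => θ (adjoint u * x * u)) := by
  intro ι p q hpM hqM hproj horth hsum ξ
  classical
  simp only []
  have hpa : ∀ i, adjoint (p i) = p i := by
    intro i
    rw [← star_eq_adjoint]
    exact (hproj i).1
  have hmmem : ∀ i, adjoint u * p i * u ∈ M := fun i => compress_mem hSF hθ hu hequi (hpM i)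
  have hqmem : adjoint u * q * u ∈ M := compress_mem hSF hθ hu hequi hqM
  -- self-adjointness of q
  have hq_key : ∀ η ζ : H, ⟪q η, ζ⟫_ℂ = ⟪η, q ζ⟫_ℂ := by
    intro η ζ
    have h1 : HasSum (fun i => ⟪η, p i ζ⟫_ℂ) ⟪η, q ζ⟫_ℂ := (hsum ζ).mapL (innerSL ℂ η)
    have h2 : HasSum (fun i => ⟪ζ, p i η⟫_ℂ) ⟪ζ, q η⟫_ℂ := (hsum η).mapL (innerSL ℂ ζ)
    have h3 := h2.star
    have h4 : HasSum (fun i => ⟪p i η, ζ⟫_ℂ) ⟪q η, ζ⟫_ℂ := by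
      simpa only [RCLike.star_def, inner_conj_symm] using h3
    have h5 : (fun i => ⟪p i η, ζ⟫_ℂ) = fun i => ⟪η, p i ζ⟫_ℂ := by
      funext i
      rw [← hpa i, adjoint_inner_left, hpa i]
    rw [h5] at h4
    exact h4.unique h1
  have hq_sa : IsSelfAdjoint q := by
    rw [ContinuousLinearMap.isSelfAdjoint_iff']
    ext η
    apply ext_inner_right ℂ
    intro ζ
    rw [adjoint_inner_left]
    exact (hq_key η ζ).symm
  -- partial sums
  set P : Finset ι → (H →L[ℂ] H) := fun F => ∑ i ∈ F, p i with hPdef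
  have hP_sa : ∀ F, IsSelfAdjoint (P F) := by
    intro F
    rw [IsSelfAdjoint, hPdef]
    simp only [star_sum]
    exact Finset.sum_congr rfl fun i _ => (hproj i).1
  have hPP : ∀ F, P F * P F = P F := by
    intro F
    rw [hPdef]
    simp only [Finset.sum_mul_sum]
    refine Finset.sum_congr rfl fun i hi => ?_
    rw [Finset.sum_eq_single i (fun k _ hk => horth i k (fun h => hk h.symm))
      (fun h => absurd hi h), (hproj i).2]
  have hPmem : ∀ F, P F ∈ M := fun F => sum_mem fun i _ => hpM i
  -- square sums
  have hself : ∀ v : H, (⟪v, v⟫_ℂ).re = ‖v‖^2 := fun v => inner_self_eq_norm_sq (𝕜 := ℂ) v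
  have hinner_sq : ∀ (i : ι) (η : H), ⟪η, p i η⟫_ℂ = ⟪p i η, p i η⟫_ℂ := by
    intro i η
    have e : ⟪η, adjoint (p i) (p i η)⟫_ℂ = ⟪p i η, p i η⟫_ℂ := adjoint_inner_right _ _ _
    rw [hpa i] at e
    have hidem : p i (p i η) = p i η := by rw [← mul_apply_eq_comp, (hproj i).2]
    calc ⟪η, p i η⟫_ℂ = ⟪η, p i (p i η)⟫_ℂ := by rw [hidem]
    _ = ⟪p i η, p i η⟫_ℂ := e
  have hinner_sq_re : ∀ (i : ι) (η : H), (⟪η, p i η⟫_ℂ).re = ‖p i η‖^2 := by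
    intro i η
    rw [hinner_sq i η]
    exact hself _
  have hsumsq : ∀ η : H, HasSum (fun i => ‖p i η‖^2) ((⟪η, q η⟫_ℂ).re) := by
    intro η
    have h1 : HasSum (fun i => ⟪η, p i η⟫_ℂ) ⟪η, q η⟫_ℂ := (hsum η).mapL (innerSL ℂ η)
    have h2 := h1.mapL Complex.reCLM
    simpa only [Complex.reCLM_apply, hinner_sq_re] using h2
  have hPadj : ∀ F, adjoint (P F) = P F := by
    intro F
    rw [← star_eq_adjoint]
    exact hP_sa F
  have hPn : ∀ (F : Finset ι) (η : H), (⟪η, P F η⟫_ℂ).re = ∑ i ∈ F, ‖p i η‖^2 := by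
    intro F η
    have e0 : ⟪η, P F η⟫_ℂ = ∑ i ∈ F, ⟪η, p i η⟫_ℂ := by
      rw [hPdef]
      simp only [ContinuousLinearMap.sum_apply, inner_sum]
    rw [e0, Complex.re_sum]
    exact Finset.sum_congr rfl fun i _ => hinner_sq_re i η
  have hPsq : ∀ (F : Finset ι) (η : H), (⟪η, P F η⟫_ℂ).re = ‖P F η‖^2 := by
    intro F η
    have e1 : ⟪η, adjoint (P F) (P F η)⟫_ℂ = ⟪P F η, P F η⟫_ℂ := adjoint_inner_right _ _ _
    rw [hPadj F] at e1
    have e2 : P F (P F η) = P F η := by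
      rw [← mul_apply_eq_comp, hPP]
    rw [e2] at e1
    rw [e1]
    exact hself _
  have hP_norm_le : ∀ (F : Finset ι) (η : H), ‖P F η‖ ≤ ‖η‖ := by
    intro F η
    have h1 : ‖P F η‖^2 = (⟪η, P F η⟫_ℂ).re := (hPsq F η).symm
    have h2 : (⟪η, P F η⟫_ℂ).re ≤ ‖η‖ * ‖P F η‖ := by
      have := re_inner_le_norm (𝕜 := ℂ) η (P F η)
      simpa using this
    nlinarith [norm_nonneg (P F η), norm_nonneg η]
  have hple : ∀ (F : Finset ι) (η : H), ∑ i ∈ F, ‖p i η‖^2 ≤ ‖η‖^2 := by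
    intro F η
    rw [← hPn F η, hPsq F η]
    have := hP_norm_le F η
    nlinarith [norm_nonneg (P F η), norm_nonneg η]
  -- positivity of tails
  have hr_re : ∀ (F : Finset ι) (η : H),
      (⟪(q - P F) η, η⟫_ℂ).re = (⟪η, q η⟫_ℂ).re - ∑ i ∈ F, ‖p i η‖^2 := by
    intro F η
    rw [ContinuousLinearMap.sub_apply, inner_sub_left]
    have e1 : (⟪q η, η⟫_ℂ).re = (⟪η, q η⟫_ℂ).re := inner_re_symm (𝕜 := ℂ) (q η) η
    have e2 : (⟪P F η, η⟫_ℂ).re = (⟪η, P F η⟫_ℂ).re := inner_re_symm (𝕜 := ℂ) (P F η) η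
    simp only [Complex.sub_re]
    rw [e1, e2, hPn F η]
  have hr_nonneg : ∀ (F : Finset ι) (η : H), 0 ≤ (⟪(q - P F) η, η⟫_ℂ).re := by
    intro F η
    rw [hr_re F η]
    have h1 : ∑ i ∈ F, ‖p i η‖^2 ≤ (⟪η, q η⟫_ℂ).re :=
      sum_le_hasSum F (fun i _ => by positivity) (hsumsq η)
    linarith
  have hr_le : ∀ (F : Finset ι) (η : H), (⟪(q - P F) η, η⟫_ℂ).re ≤ ‖η‖^2 := by
    intro F η
    rw [hr_re F η]
    have h1 : (⟪η, q η⟫_ℂ).re ≤ ‖η‖^2 :=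
      hasSum_le_of_sum_le (hsumsq η) (fun F' => hple F' η)
    have h2 : 0 ≤ ∑ i ∈ F, ‖p i η‖^2 := Finset.sum_nonneg fun i _ => by positivity
    linarith
  have hr_sa : ∀ F : Finset ι, IsSelfAdjoint (q - P F) := fun F => hq_sa.sub (hP_sa F)
  have hw_sa : ∀ F : Finset ι, IsSelfAdjoint (adjoint u * (q - P F) * u) := by
    intro F
    show star _ = _
    rw [star_mul, star_mul, star_eq_adjoint u, star_eq_adjoint (adjoint u), adjoint_adjoint,
      (hr_sa F).star_eq, mul_assoc]
  have hw_apply : ∀ (F : Finset ι) (ξ' : H),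
      (⟪(adjoint u * (q - P F) * u) ξ', ξ'⟫_ℂ).re = (⟪(q - P F) (u ξ'), u ξ'⟫_ℂ).re := by
    intro F ξ'
    have e1 : (adjoint u * (q - P F) * u) ξ' = adjoint u ((q - P F) (u ξ')) := by
      simp [mul_apply_eq_comp]
    rw [e1, adjoint_inner_left]
  have hw_pos : ∀ F : Finset ι, (adjoint u * (q - P F) * u).IsPositive := by
    intro F
    refine ContinuousLinearMap.isPositive_def'.mpr ⟨hw_sa F, fun ξ' => ?_⟩
    rw [ContinuousLinearMap.reApplyInnerSelf_apply]
    rw [show (RCLike.re (⟪(adjoint u * (q - P F) * u) ξ', ξ'⟫_ℂ) : ℝ)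
      = (⟪(adjoint u * (q - P F) * u) ξ', ξ'⟫_ℂ).re from rfl]
    rw [hw_apply F ξ']
    exact hr_nonneg F (u ξ')
  have h1mw_pos : ∀ F : Finset ι, ((1 : H →L[ℂ] H) - adjoint u * (q - P F) * u).IsPositive := by
    intro F
    refine ContinuousLinearMap.isPositive_def'.mpr ⟨((IsSelfAdjoint.one (H →L[ℂ] H)).sub (hw_sa F)), fun ξ' => ?_⟩
    rw [ContinuousLinearMap.reApplyInnerSelf_apply]
    rw [show (RCLike.re (⟪((1 : H →L[ℂ] H) - adjoint u * (q - P F) * u) ξ', ξ'⟫_ℂ) : ℝ)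
      = (⟪((1 : H →L[ℂ] H) - adjoint u * (q - P F) * u) ξ', ξ'⟫_ℂ).re from rfl]
    rw [ContinuousLinearMap.sub_apply, inner_sub_left, Complex.sub_re, one_apply_eq_self]
    have e1 : (⟪ξ', ξ'⟫_ℂ).re = ‖ξ'‖^2 := hself ξ'
    rw [e1, hw_apply F ξ']
    have h2 : (⟪(q - P F) (u ξ'), u ξ'⟫_ℂ).re ≤ ‖u ξ'‖^2 := hr_le F (u ξ')
    rw [hu.1 ξ'] at h2
    linarith
  -- uniform norm bound
  have hTnorm : ∀ F : Finset ι,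
      ‖θ (adjoint u * q * u) - ∑ i ∈ F, θ (adjoint u * p i * u)‖ ≤ 1 := by
    intro F
    have hsum_eq : ∑ i ∈ F, θ (adjoint u * p i * u) = θ (adjoint u * P F * u) := by
      rw [show adjoint u * P F * u = ∑ i ∈ F, (adjoint u * p i * u) by
        rw [hPdef, Finset.mul_sum, Finset.sum_mul]]
      exact (theta_sum hθ F _ hmmem).symm
    have hδ : θ (adjoint u * q * u) - θ (adjoint u * P F * u)
        = θ (adjoint u * (q - P F) * u) := by
      rw [← theta_sub hθ hqmem (compress_mem hSF hθ hu hequi (hPmem F))]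
      congr 1
      rw [mul_sub, sub_mul]
    rw [hsum_eq, hδ]
    exact theta_norm_le hθ (compress_mem hSF hθ hu hequi (sub_mem hqM (hPmem F)))
      (hw_pos F) (h1mw_pos F)
  -- convergence on the dense orbit of the commutant
  have hkey : ∀ x ∈ M, ∀ c ∈ Set.centralizer (M : Set (H →L[ℂ] H)),
      θ (adjoint u * x * u) (c Ω) = (c ∘L u ∘L adjoint u) (x Ω) := by
    intro x hx c hc
    have hmem : adjoint u * x * u ∈ M := compress_mem hSF hθ hu hequi hx
    have hθmem : θ (adjoint u * x * u) ∈ M := hθ.mapsTo hmem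
    have hcm : θ (adjoint u * x * u) * c = c * θ (adjoint u * x * u) :=
      Set.mem_centralizer_iff.mp hc _ hθmem
    calc θ (adjoint u * x * u) (c Ω) = (θ (adjoint u * x * u) * c) Ω := by rw [mul_apply_eq_comp]
    _ = (c * θ (adjoint u * x * u)) Ω := by rw [hcm]
    _ = c (θ (adjoint u * x * u) Ω) := by rw [mul_apply_eq_comp]
    _ = c (u ((adjoint u * x * u) Ω)) := by rw [hu.2 _ hmem]
    _ = c (u (adjoint u (x (u Ω)))) := by simp [mul_apply_eq_comp]
    _ = (c ∘L u ∘L adjoint u) (x Ω) := by rw [u_omega hθ hu]; rfl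
  have hDsum : ∀ c ∈ Set.centralizer (M : Set (H →L[ℂ] H)),
      HasSum (fun i => θ (adjoint u * p i * u) (c Ω)) (θ (adjoint u * q * u) (c Ω)) := by
    intro c hc
    have h1 := (hsum Ω).mapL (c ∘L u ∘L adjoint u)
    have h2 : (fun i => θ (adjoint u * p i * u) (c Ω))
        = fun i => (c ∘L u ∘L adjoint u) (p i Ω) :=
      funext fun i => hkey _ (hpM i) c hc
    rw [h2, hkey q hqM c hc]
    exact h1
  -- epsilon argument
  rw [HasSum, SummationFilter.unconditional_filter, Metric.tendsto_atTop]
  intro ε hε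
  have hε3 : 0 < ε / 3 := by linarith
  obtain ⟨ξ', hball, hξ'D⟩ := (Metric.dense_iff.mp (dense_commutant_orbit hSF) ξ (ε/3) hε3)
  obtain ⟨c, hc, rfl⟩ := hξ'D
  have hs' := hDsum c hc
  rw [HasSum, SummationFilter.unconditional_filter, Metric.tendsto_atTop] at hs'
  obtain ⟨F₀, hF₀⟩ := hs' (ε/3) hε3
  refine ⟨F₀, fun F hF => ?_⟩
  have hb1 := hTnorm F
  set T := θ (adjoint u * q * u) with hT
  set S := ∑ i ∈ F, θ (adjoint u * p i * u) with hS
  have hSapp : ∀ η : H, ∑ i ∈ F, θ (adjoint u * p i * u) η = S η := by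
    intro η
    rw [hS, ContinuousLinearMap.sum_apply]
  have hd1 : dist (S (c Ω)) (T (c Ω)) < ε/3 := by
    have := hF₀ F hF
    rw [← hSapp (c Ω)]
    exact this
  have hd2 : dist ξ (c Ω) < ε/3 := by
    rw [dist_comm]
    exact Metric.mem_ball.mp hball
  rw [hSapp ξ]
  rw [dist_eq_norm]
  have hdecomp : S ξ - T ξ = (S - T) (ξ - c Ω) + (S (c Ω) - T (c Ω)) := by
    simp only [ContinuousLinearMap.sub_apply, map_sub]
    abel
  rw [hdecomp]
  have hn1 : ‖(S - T) (ξ - c Ω)‖ ≤ ‖S - T‖ * ‖ξ - c Ω‖ := (S - T).le_opNorm _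
  have hn2 : ‖S - T‖ ≤ 1 := by
    rw [← norm_neg, neg_sub]
    exact hb1
  have hn3 : ‖ξ - c Ω‖ < ε/3 := by
    rw [← dist_eq_norm]
    exact hd2
  have hn4 : ‖S (c Ω) - T (c Ω)‖ < ε/3 := by
    rw [← dist_eq_norm]
    exact hd1
  calc ‖(S - T) (ξ - c Ω) + (S (c Ω) - T (c Ω))‖
      ≤ ‖(S - T) (ξ - c Ω)‖ + ‖S (c Ω) - T (c Ω)‖ := norm_add_le _ _
  _ < ‖S - T‖ * ‖ξ - c Ω‖ + ε/3 := by linarith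
  _ ≤ 1 * (ε/3) + ε/3 := by
      have h0 : 0 ≤ ‖ξ - c Ω‖ := norm_nonneg _
      nlinarith [norm_nonneg (S - T)]
  _ < ε := by linarith

end Main3

section Main4
open ContinuousLinearMap
variable {M : VonNeumannAlgebra H} {Ω : H} {J : H → H} {j : (H →L[ℂ] H) → (H →L[ℂ] H)}
variable {θ : (H →L[ℂ] H) → (H →L[ℂ] H)} {u : H →L[ℂ] H}

lemma condexp_unique (hSF : StandardForm M Ω J j) (hθ : StateEndo M Ω θ)
    {E' E'' : (H →L[ℂ] H) → (H →L[ℂ] H)}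
    (hE' : IsCondExp M Ω (θ '' (M : Set (H →L[ℂ] H))) E')
    (hE'' : IsCondExp M Ω (θ '' (M : Set (H →L[ℂ] H))) E'') :
    Set.EqOn E' E'' (M : Set (H →L[ℂ] H)) := by
  intro x hx
  obtain ⟨a₁, ha₁, hA⟩ := hE'.mapsTo x hx
  obtain ⟨a₂, ha₂, hB⟩ := hE''.mapsTo x hx
  set c := a₁ - a₂ with hcdef
  have hc : c ∈ M := sub_mem ha₁ ha₂
  have hθc : θ c = E' x - E'' x := by
    rw [hcdef, theta_sub hθ ha₁ ha₂, hA, hB]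
  have hθcM : θ c ∈ M := hθ.mapsTo hc
  have hgen : ∀ (F : (H →L[ℂ] H) → (H →L[ℂ] H)),
      IsCondExp M Ω (θ '' (M : Set (H →L[ℂ] H))) F →
      ⟪F x Ω, θ c Ω⟫_ℂ = ⟪(θ (star c) * x) Ω, Ω⟫_ℂ := by
    intro F hF
    have hθscM : θ (star c) ∈ M := hθ.mapsTo (star_mem hc)
    have h1 : ⟪F x Ω, θ c Ω⟫_ℂ = ⟪(star (θ c) * F x) Ω, Ω⟫_ℂ := by
      rw [mul_apply_eq_comp]
      have : star (θ c) = adjoint (θ c) := star_eq_adjoint _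
      rw [this, adjoint_inner_left]
    have hθsc : star (θ c) = θ (star c) := (hθ.hom.map_star c hc).symm
    have hP1 : (1 : H →L[ℂ] H) ∈ θ '' (M : Set (H →L[ℂ] H)) := ⟨1, one_mem M, hθ.unital⟩
    have hPc : θ (star c) ∈ θ '' (M : Set (H →L[ℂ] H)) := ⟨star c, star_mem hc, rfl⟩
    have h3 : θ (star c) * F x * 1 = F (θ (star c) * x * 1) :=
      (hF.bimodule _ hPc _ hP1 x hx).symm
    rw [mul_one, mul_one] at h3
    have h4 : ⟪F (θ (star c) * x) Ω, Ω⟫_ℂ = ⟪(θ (star c) * x) Ω, Ω⟫_ℂ :=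
      hF.state _ (mul_mem hθscM hx)
    rw [h1, hθsc, h3, h4]
  have hd : ⟪θ c Ω, θ c Ω⟫_ℂ = 0 := by
    have h5 : ⟪(E' x - E'' x) Ω, θ c Ω⟫_ℂ = 0 := by
      rw [ContinuousLinearMap.sub_apply, inner_sub_left, hgen E' hE', hgen E'' hE'', sub_self]
    rw [← hθc] at h5
    exact h5
  have h6 : θ c Ω = 0 := inner_self_eq_zero.mp hd
  have h7 : θ c = 0 := hSF.separating _ hθcM h6
  have h8 : E' x - E'' x = 0 := by rw [← hθc, h7]
  exact sub_eq_zero.mp h8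

theorem main_statement
    (M : VonNeumannAlgebra H) (Ω : H) (J : H → H) (j : (H →L[ℂ] H) → (H →L[ℂ] H))
    (hSF : StandardForm M Ω J j)
    (θ : (H →L[ℂ] H) → (H →L[ℂ] H)) (hθ : StateEndo M Ω θ)
    (u : H →L[ℂ] H) (hu : Implements M Ω θ u) (hequi : CommutesWithJ J u) :
    (∃ E : (H →L[ℂ] H) → (H →L[ℂ] H),
      IsCondExp M Ω (θ '' (M : Set (H →L[ℂ] H))) E ∧
      (∀ x ∈ M, E x * (u * ContinuousLinearMap.adjoint u) =
        (u * ContinuousLinearMap.adjoint u) * x * (u * ContinuousLinearMap.adjoint u)) ∧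
      ∀ E' : (H →L[ℂ] H) → (H →L[ℂ] H),
        IsCondExp M Ω (θ '' (M : Set (H →L[ℂ] H))) E' →
        Set.EqOn E' E (M : Set (H →L[ℂ] H))) ∧
    IsProjection (u * ContinuousLinearMap.adjoint u) ∧
    Set.range ⇑(u * ContinuousLinearMap.adjoint u) =
      closure {ξ : H | ∃ y ∈ θ '' (M : Set (H →L[ℂ] H)), y Ω = ξ} := by
  have hproj_e : IsProjection (u * adjoint u) := by
    constructor
    · show star _ = _
      rw [star_mul, star_eq_adjoint u, star_eq_adjoint (adjoint u), adjoint_adjoint]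
    · have h1 : (u * adjoint u) * (u * adjoint u) = u * ((adjoint u * u) * adjoint u) := by
        simp only [mul_assoc]
      rw [h1, adj_mul_self hu, one_mul]
  have hE : IsCondExp M Ω (θ '' (M : Set (H →L[ℂ] H)))
      (fun x => θ (adjoint u * x * u)) := by
    constructor
    · intro x hx
      exact ⟨adjoint u * x * u, compress_mem hSF hθ hu hequi hx, rfl⟩
    · intro x hx y hy
      have h1 : adjoint u * (x + y) * u = adjoint u * x * u + adjoint u * y * u := by
        rw [mul_add, add_mul]
      rw [h1]
      exact hθ.hom.map_add _ (compress_mem hSF hθ hu hequi hx) _ (compress_mem hSF hθ hu hequi hy)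
    · intro c x hx
      have h1 : adjoint u * (c • x) * u = c • (adjoint u * x * u) := by
        rw [mul_smul_comm, smul_mul_assoc]
      rw [h1]
      exact hθ.hom.map_smul c _ (compress_mem hSF hθ hu hequi hx)
    · intro x hx
      have h1 : adjoint u * star x * u = star (adjoint u * x * u) := by
        rw [star_mul, star_mul, star_eq_adjoint u, star_eq_adjoint (adjoint u), adjoint_adjoint,
          mul_assoc]
      rw [h1]
      exact hθ.hom.map_star _ (compress_mem hSF hθ hu hequi hx)
    · rintro _ ⟨a, ha, rfl⟩
      rw [compress hSF hθ hu ha]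
    · rintro _ ⟨a, ha, rfl⟩ _ ⟨b, hb, rfl⟩ x hx
      have h1 : adjoint u * (θ a * x * θ b) * u = (adjoint u * θ a) * x * (θ b * u) := by
        simp only [mul_assoc]
      have h2 : (adjoint u * θ a) * x * (θ b * u) = a * (adjoint u * x * u) * b := by
        rw [adj_intertwine hSF hθ hu ha, ← intertwine hSF hθ hu hb]
        simp only [mul_assoc]
      have hm : adjoint u * x * u ∈ M := compress_mem hSF hθ hu hequi hx
      rw [h1, h2, hθ.hom.map_mul _ (mul_mem ha hm) _ hb, hθ.hom.map_mul _ ha _ hm]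
    · intro x hx
      have h1 : adjoint u * (star x * x) * u = star (x * u) * (x * u) := by
        rw [star_mul, star_eq_adjoint u]
        simp only [mul_assoc]
      rw [h1]
      have h2 : star (x * u) * (x * u) = adjoint u * (star x * x) * u := h1.symm
      rw [h2]
      exact theta_pos hθ (compress_mem hSF hθ hu hequi (mul_mem (star_mem hx) hx))
        (by rw [← h2]; exact isPositive_star_mul_self (x * u))
    · intro x hx
      have h1 : ⟪θ (adjoint u * x * u) Ω, Ω⟫_ℂ = ⟪(adjoint u * x * u) Ω, Ω⟫_ℂ :=
        hθ.state _ (compress_mem hSF hθ hu hequi hx)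
      rw [h1]
      have h2 : (adjoint u * x * u) Ω = adjoint u (x Ω) := by
        simp only [mul_apply_eq_comp]
        rw [u_omega hθ hu]
      rw [h2, adjoint_inner_left, u_omega hθ hu]
    · intro x hx h0
      have h1 : ⟪θ (adjoint u * (star x * x) * u) Ω, Ω⟫_ℂ = ⟪(star x * x) Ω, Ω⟫_ℂ := by
        have ha := hθ.state _ (compress_mem hSF hθ hu hequi (mul_mem (star_mem hx) hx))
        rw [ha]
        have h2 : (adjoint u * (star x * x) * u) Ω = adjoint u ((star x * x) Ω) := by
          simp only [mul_apply_eq_comp]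
          rw [u_omega hθ hu]
        rw [h2, adjoint_inner_left, u_omega hθ hu]
      rw [h0] at h1
      simp only [zero_apply, inner_zero_left] at h1
      have h3 : ⟪x Ω, x Ω⟫_ℂ = 0 := by
        have h4 : (star x * x) Ω = star x (x Ω) := by rw [mul_apply_eq_comp]
        rw [h4] at h1
        have h5 : star x = adjoint x := star_eq_adjoint x
        rw [h5, adjoint_inner_left] at h1
        exact h1.symm
      exact hSF.separating x hx (inner_self_eq_zero.mp h3)
    · exact E_normal hSF hθ hu hequi
  have hJones : ∀ x ∈ M, θ (adjoint u * x * u) * (u * adjoint u)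
      = (u * adjoint u) * x * (u * adjoint u) := by
    intro x hx
    have hm : adjoint u * x * u ∈ M := compress_mem hSF hθ hu hequi hx
    calc θ (adjoint u * x * u) * (u * adjoint u)
        = (θ (adjoint u * x * u) * u) * adjoint u := (mul_assoc _ _ _).symm
    _ = (u * (adjoint u * x * u)) * adjoint u := by rw [← intertwine hSF hθ hu hm]
    _ = (u * adjoint u) * x * (u * adjoint u) := by simp only [mul_assoc]
  have hrange : Set.range ⇑(u * adjoint u) =
      closure {ξ : H | ∃ y ∈ θ '' (M : Set (H →L[ℂ] H)), y Ω = ξ} := by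
    have hset : {ξ : H | ∃ y ∈ θ '' (M : Set (H →L[ℂ] H)), y Ω = ξ}
        = u '' {ξ : H | ∃ x ∈ M, x Ω = ξ} := by
      ext ζ
      constructor
      · rintro ⟨_, ⟨x, hx, rfl⟩, rfl⟩
        exact ⟨x Ω, ⟨x, hx, rfl⟩, hu.2 x hx⟩
      · rintro ⟨_, ⟨x, hx, rfl⟩, rfl⟩
        exact ⟨θ x, ⟨x, hx, rfl⟩, (hu.2 x hx).symm⟩
    have hiso : Isometry u := AddMonoidHomClass.isometry_of_norm u hu.1
    have hclosed := hiso.isClosedEmbedding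
    rw [hset, hclosed.closure_image_eq, hSF.cyclic.closure_eq, Set.image_univ]
    ext ζ
    constructor
    · rintro ⟨η, rfl⟩
      exact ⟨adjoint u η, by rw [mul_apply_eq_comp]⟩
    · rintro ⟨η, rfl⟩
      refine ⟨u η, ?_⟩
      have h1 : adjoint u (u η) = η := by
        have h2 : (adjoint u * u) η = (1 : H →L[ℂ] H) η := by rw [adj_mul_self hu]
        simpa [mul_apply_eq_comp] using h2
      rw [mul_apply_eq_comp, h1]
  exact ⟨⟨fun x => θ (adjoint u * x * u), hE, hJones,
    fun E' hE' => condexp_unique hSF hθ hE' hE⟩, hproj_e, hrange⟩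

end Main4

/-- **Remark 3.3.**  If `θ` is an equi-modular endomorphism of the factor `M` in standard form,
then there is a unique `φ`-preserving faithful normal conditional expectation
`E : M → P = θ(M)`; moreover `e_θ = u_θ u_θ*` is the orthogonal projection onto the closure of
`P Ω` and is the Jones projection of `E`:  `E(x) e_θ = e_θ x e_θ` for all `x ∈ M`. -/
theorem remark_3_3
    (M : VonNeumannAlgebra H) (Ω : H) (J : H → H) (j : (H →L[ℂ] H) → (H →L[ℂ] H))
    (hSF : StandardForm M Ω J j) (hM : IsFactorSet (M : Set (H →L[ℂ] H)))
    (θ : (H →L[ℂ] H) → (H →L[ℂ] H)) (hθ : StateEndo M Ω θ)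
    (u : H →L[ℂ] H) (hu : Implements M Ω θ u) (hequi : CommutesWithJ J u) :
    (∃ E : (H →L[ℂ] H) → (H →L[ℂ] H),
      IsCondExp M Ω (θ '' (M : Set (H →L[ℂ] H))) E ∧
      (∀ x ∈ M, E x * (u * ContinuousLinearMap.adjoint u) =
        (u * ContinuousLinearMap.adjoint u) * x * (u * ContinuousLinearMap.adjoint u)) ∧
      ∀ E' : (H →L[ℂ] H) → (H →L[ℂ] H),
        IsCondExp M Ω (θ '' (M : Set (H →L[ℂ] H))) E' →
        Set.EqOn E' E (M : Set (H →L[ℂ] H))) ∧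
    IsProjection (u * ContinuousLinearMap.adjoint u) ∧
    Set.range ⇑(u * ContinuousLinearMap.adjoint u) =
      closure {ξ : H | ∃ y ∈ θ '' (M : Set (H →L[ℂ] H)), y Ω = ξ} :=
  main_statement M Ω J j hSF θ hθ u hu hequi

end Paper
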